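/- Let T be a finite rooted forest on vertex set [m], and for i, j ∈ [m] write i → j if i is a (strict) ancestor of j. For R ⊆ [m] define the outer nodes of R as outer(R) = {i ∈ R : there is no j ∈ R with i → j}. Then the outer nodes filter is monotonic: for any R1 ⊇ R2 ⊆ [m], |outer(R1)| ≥ |outer(R2)|. -/

import Mathlib

open Finset

/-- The strict-ancestor relation of a parent map: `isAncestor parent i j` means that `i` is a
strict ancestor of `j`, i.e. there is a nonempty chain of parent steps from `j` up to `i`. -/
def isAncestor {m : ℕ} (parent : Fin m → Option (Fin m)) (i j : Fin m) : Prop :=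
  Relation.TransGen (fun x y => parent x = some y) j i

open Classical in
/-- The outer nodes of `R`: the elements of `R` having no strict descendant in `R`. -/
noncomputable def outer {m : ℕ} (parent : Fin m → Option (Fin m))
    (R : Finset (Fin m)) : Finset (Fin m) :=
  R.filter (fun i => ∀ j ∈ R, ¬ isAncestor parent i j)

/-- Chains of a functional relation from a common point are comparable. -/
lemma chain_comp {α : Type*} {r : α → α → Prop}
    (hfun : ∀ a b c, r a b → r a c → b = c) :
    ∀ {a b c : α}, Relation.ReflTransGen r a b → Relation.ReflTransGen r a c →
      Relation.ReflTransGen r b c ∨ Relation.ReflTransGen r c b := by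
  intro a b c hab
  induction hab with
  | refl => intro h; exact Or.inl h
  | tail hab' hstep ih =>
    intro hac
    rcases ih hac with h | h
    · rcases Relation.ReflTransGen.cases_head h with rfl | ⟨d, hd, hdc⟩
      · exact Or.inr (Relation.ReflTransGen.single hstep)
      · exact Or.inl (by rwa [hfun _ _ _ hstep hd])
    · exact Or.inr (h.tail hstep)

open Classical in
lemma exists_outer {m : ℕ} (parent : Fin m → Option (Fin m))
    (hacyc : ∀ i : Fin m, ¬ isAncestor parent i i)
    (R : Finset (Fin m)) :
    ∀ n (i : Fin m), i ∈ R →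
      (R.filter (fun j => isAncestor parent i j)).card ≤ n →
      ∃ k ∈ outer parent R, Relation.ReflTransGen (fun x y => parent x = some y) k i := by
  intro n
  induction n with
  | zero =>
    intro i hi hcard
    refine ⟨i, ?_, Relation.ReflTransGen.refl⟩
    rw [outer, mem_filter]
    refine ⟨hi, fun j hj hij => ?_⟩
    have : j ∈ R.filter (fun j => isAncestor parent i j) := by
      simp [mem_filter, hj, hij]
    have := card_pos.mpr ⟨j, this⟩
    omega
  | succ n ih =>
    intro i hi hcard
    by_cases h : ∀ j ∈ R, ¬ isAncestor parent i j
    · exact ⟨i, by rw [outer, mem_filter]; exact ⟨hi, h⟩, Relation.ReflTransGen.refl⟩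
    · push_neg at h
      obtain ⟨j, hjR, hij⟩ := h
      have hsub : R.filter (fun x => isAncestor parent j x) ⊆
          R.filter (fun x => isAncestor parent i x) := by
        intro x hx
        rw [mem_filter] at hx ⊢
        exact ⟨hx.1, hx.2.trans hij⟩
      have hjin : j ∈ R.filter (fun x => isAncestor parent i x) := by
        simp [mem_filter, hjR, hij]
      have hjnot : j ∉ R.filter (fun x => isAncestor parent j x) := by
        intro hmem
        rw [mem_filter] at hmem
        exact hacyc j hmem.2
      have hlt : (R.filter (fun x => isAncestor parent j x)).card <
          (R.filter (fun x => isAncestor parent i x)).card :=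
        card_lt_card (ssubset_iff_of_subset hsub |>.mpr ⟨j, hjin, hjnot⟩)
      obtain ⟨k, hk, hkj⟩ := ih j hjR (by omega)
      exact ⟨k, hk, hkj.trans hij.to_reflTransGen⟩

/-- **The outer nodes filter is monotonic on rooted forests.**
Let a finite rooted forest on `[m]` be given by a parent map (each vertex has at most one
parent) with no directed cycles. Then for any `R1 ⊇ R2`, `|outer(R1)| ≥ |outer(R2)|`. -/
theorem outer_nodes_monotonic_on_forest
    {m : ℕ} (parent : Fin m → Option (Fin m))
    (hacyc : ∀ i : Fin m, ¬ isAncestor parent i i) :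
    ∀ R1 R2 : Finset (Fin m), R2 ⊆ R1 →
      (outer parent R2).card ≤ (outer parent R1).card := by
  classical
  intro R1 R2 hsub
  have hex : ∀ i ∈ outer parent R2, ∃ k ∈ outer parent R1,
      Relation.ReflTransGen (fun x y => parent x = some y) k i := by
    intro i hi
    have hiR1 : i ∈ R1 := hsub (mem_filter.mp hi).1
    exact exists_outer parent hacyc R1 _ i hiR1 le_rfl
  choose f hf hchain using hex
  apply card_le_card_of_injOn (fun i => if h : i ∈ outer parent R2 then f i h else i)
  · intro i hi
    simp only [mem_coe] at hi ⊢; simp only [hi, dif_pos]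
    exact hf i hi
  · intro i1 h1 i2 h2 heq
    simp only [mem_coe] at h1 h2
    simp only [h1, h2, dif_pos] at heq
    by_contra hne
    have hfun : ∀ a b c : Fin m, parent a = some b → parent a = some c → b = c := by
      intro a b c hb hc
      rw [hb] at hc; exact Option.some.inj hc
    have hcomp := chain_comp hfun (heq ▸ hchain i1 h1) (hchain i2 h2)
    have hi1R2 : i1 ∈ R2 := (mem_filter.mp h1).1
    have hi2R2 : i2 ∈ R2 := (mem_filter.mp h2).1
    rcases hcomp with h | h
    · rcases Relation.ReflTransGen.cases_head h with rfl | ⟨d, hd, hdc⟩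
      · exact hne rfl
      · exact (mem_filter.mp h2).2 i1 hi1R2
          (Relation.TransGen.head' hd hdc)
    · rcases Relation.ReflTransGen.cases_head h with rfl | ⟨d, hd, hdc⟩
      · exact hne rfl
      · exact (mem_filter.mp h1).2 i2 hi2R2
          (Relation.TransGen.head' hd hdc)
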